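/- In the multi-target detection model with well-separated signals, i.e. s_k − s_{k−1} ≥ 2L−1 for all k, the deterministic identity a³_{s∗x}[l₁, l₂] = ρ₀ a_x³[l₁, l₂] holds for all 0 ≤ l₁ ≤ l₂ ≤ L−1. -/

import Mathlib

/-- The sequence `z` of length `m`, zero-padded to all of `ℤ`. -/
noncomputable def zpad (m : ℕ) (z : ℕ → ℝ) : ℤ → ℝ :=
  fun i => if 0 ≤ i ∧ i < (m : ℤ) then z i.toNat else 0

/-- Third-order autocorrelation of the length-`m` sequence `z` with integer shifts `l₁, l₂`:
`a_z³[l₁,l₂] = (1/m) Σ_{i=0}^{m−1} z[i] z[i+l₁] z[i+l₂]`, with `z` extended by zero. -/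
noncomputable def acorr3 (m : ℕ) (z : ℕ → ℝ) (l₁ l₂ : ℤ) : ℝ :=
  (1 / (m : ℝ)) * ∑ i ∈ Finset.range m, zpad m z i * zpad m z (i + l₁) * zpad m z (i + l₂)

/-- The (zero-padded) linear convolution `s∗x` of the binary sequence `s` with the signal `x`
of length `L`, where `s` has `M` nonzero entries at the positions `p 0 < p 1 < ⋯ < p (M−1)`:
`(s∗x)[i] = Σ_k x[i − p k]`, with `x` extended by zero. -/
noncomputable def sconv (L M : ℕ) (x : ℕ → ℝ) (p : Fin M → ℕ) : ℤ → ℝ :=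
  fun i => ∑ k : Fin M, zpad L x (i - (p k : ℤ))

lemma zpad_ne_zero {m : ℕ} {z : ℕ → ℝ} {t : ℤ} (h : zpad m z t ≠ 0) :
    0 ≤ t ∧ t < (m : ℤ) := by
  by_contra hc
  exact h (if_neg hc)

lemma zpad_eq_zero {m : ℕ} (z : ℕ → ℝ) {t : ℤ} (h : ¬ (0 ≤ t ∧ t < (m : ℤ))) :
    zpad m z t = 0 := if_neg h

lemma sep_mono {L M : ℕ} {p : Fin M → ℕ}
    (hsep : ∀ k : ℕ, ∀ hk : k + 1 < M, p ⟨k, by omega⟩ + (2 * L - 1) ≤ p ⟨k + 1, hk⟩) :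
    ∀ a b : ℕ, ∀ hb : b < M, ∀ ha : a < b,
      p ⟨a, by omega⟩ + (2 * L - 1) ≤ p ⟨b, hb⟩ := by
  intro a b
  induction b with
  | zero => omega
  | succ n ih =>
    intro hb hab
    rcases Nat.lt_succ_iff_lt_or_eq.mp hab with h | h
    · have h1 := ih (by omega) h
      have h2 := hsep n hb
      omega
    · subst h; exact hsep a hb

lemma sep_pair {L M : ℕ} {p : Fin M → ℕ}
    (hsep : ∀ k : ℕ, ∀ hk : k + 1 < M, p ⟨k, by omega⟩ + (2 * L - 1) ≤ p ⟨k + 1, hk⟩)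
    {k k' : Fin M} (h : k ≠ k') :
    p k + (2 * L - 1) ≤ p k' ∨ p k' + (2 * L - 1) ≤ p k := by
  rcases lt_or_gt_of_ne h with h | h
  · left
    have := sep_mono hsep k k' k'.2 h
    simpa using this
  · right
    have := sep_mono hsep k' k k.2 h
    simpa using this

lemma cross_zero {L : ℕ} (hL : 0 < L) (x : ℕ → ℝ) (i : ℤ) {l : ℕ} (hl : l < L)
    {q q' : ℕ} (hqq' : q + (2 * L - 1) ≤ q' ∨ q' + (2 * L - 1) ≤ q) :
    zpad L x (i - q) * zpad L x (i + l - q') = 0 := by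
  rcases eq_or_ne (zpad L x (i - q)) 0 with h | h
  · rw [h, zero_mul]
  rcases eq_or_ne (zpad L x (i + l - q')) 0 with h' | h'
  · rw [h', mul_zero]
  have h1 := zpad_ne_zero h
  have h2 := zpad_ne_zero h'
  exfalso; omega

/-- Multi-target detection with well-separated signals (consecutive occurrences separated by
at least `2L−1` positions): the deterministic identity `a³_{s∗x}[l₁,l₂] = ρ₀ a_x³[l₁,l₂]`
holds for all `0 ≤ l₁ ≤ l₂ ≤ L−1`, where `ρ₀ = ML/N` and
`a³_{s∗x}[l₁,l₂] = (1/N) Σ_{i<N} (s∗x)[i] (s∗x)[i+l₁] (s∗x)[i+l₂]`. -/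
theorem mtd_third_order_well_separated
    (L N M : ℕ) (hL : 0 < L) (hLN : L ≤ N) (hM : 2 ≤ M)
    (x : ℕ → ℝ) (p : Fin M → ℕ)
    (hsep : ∀ k : ℕ, ∀ hk : k + 1 < M, p ⟨k, by omega⟩ + (2 * L - 1) ≤ p ⟨k + 1, hk⟩)
    (hin : ∀ k : Fin M, p k + L ≤ N)
    (l₁ l₂ : ℕ) (hl₁₂ : l₁ ≤ l₂) (hl₂ : l₂ < L) :
    (1 / (N : ℝ)) *
        ∑ i ∈ Finset.range N, sconv L M x p i * sconv L M x p (i + l₁) * sconv L M x p (i + l₂)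
      = ((M : ℝ) * L / N) * acorr3 L x l₁ l₂ := by
  have hN : 0 < N := lt_of_lt_of_le hL hLN
  have hl₁ : l₁ < L := lt_of_le_of_lt hl₁₂ hl₂
  -- diagonalize the triple product
  have key : ∀ i : ℤ,
      sconv L M x p i * sconv L M x p (i + l₁) * sconv L M x p (i + l₂)
      = ∑ k : Fin M,
          zpad L x (i - (p k : ℤ)) * zpad L x (i + l₁ - (p k : ℤ)) *
            zpad L x (i + l₂ - (p k : ℤ)) := by
    intro i
    unfold sconv
    rw [Finset.sum_mul_sum]
    have h12 : ∀ k ∈ (Finset.univ : Finset (Fin M)),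
        ∑ k' : Fin M, zpad L x (i - (p k : ℤ)) * zpad L x (i + l₁ - (p k' : ℤ))
        = zpad L x (i - (p k : ℤ)) * zpad L x (i + l₁ - (p k : ℤ)) := by
      intro k _
      apply Finset.sum_eq_single k
      · intro k' _ hk'
        exact cross_zero hL x i hl₁ (sep_pair hsep (Ne.symm hk'))
      · intro h; exact absurd (Finset.mem_univ k) h
    rw [Finset.sum_congr rfl h12, Finset.sum_mul_sum]
    apply Finset.sum_congr rfl
    intro k _
    apply Finset.sum_eq_single k
    · intro k' _ hk'
      have := cross_zero hL x i hl₂ (q := p k) (q' := p k') (sep_pair hsep (Ne.symm hk'))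
      calc zpad L x (i - (p k : ℤ)) * zpad L x (i + l₁ - (p k : ℤ)) *
          zpad L x (i + l₂ - (p k' : ℤ))
          = zpad L x (i - (p k : ℤ)) * zpad L x (i + l₂ - (p k' : ℤ)) *
            zpad L x (i + l₁ - (p k : ℤ)) := by ring
        _ = 0 := by rw [this, zero_mul]
    · intro h; exact absurd (Finset.mem_univ k) h
  -- rewrite the big sum
  have hsum : ∑ i ∈ Finset.range N,
      sconv L M x p i * sconv L M x p (i + l₁) * sconv L M x p (i + l₂)
      = (M : ℝ) * ∑ j ∈ Finset.range L,
          zpad L x j * zpad L x (j + l₁) * zpad L x (j + l₂) := by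
    calc ∑ i ∈ Finset.range N,
        sconv L M x p i * sconv L M x p (i + l₁) * sconv L M x p (i + l₂)
        = ∑ i ∈ Finset.range N, ∑ k : Fin M,
            zpad L x ((i : ℤ) - (p k : ℤ)) * zpad L x ((i : ℤ) + l₁ - (p k : ℤ)) *
              zpad L x ((i : ℤ) + l₂ - (p k : ℤ)) := by
          apply Finset.sum_congr rfl
          intro i _
          have := key (i : ℤ)
          push_cast at this ⊢
          exact this
      _ = ∑ k : Fin M, ∑ i ∈ Finset.range N,
            zpad L x ((i : ℤ) - (p k : ℤ)) * zpad L x ((i : ℤ) + l₁ - (p k : ℤ)) *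
              zpad L x ((i : ℤ) + l₂ - (p k : ℤ)) := Finset.sum_comm
      _ = ∑ k : Fin M, ∑ j ∈ Finset.range L,
            zpad L x j * zpad L x (j + l₁) * zpad L x (j + l₂) := by
          apply Finset.sum_congr rfl
          intro k _
          have hsub : Finset.Ico (p k) (p k + L) ⊆ Finset.range N := by
            intro i hi
            simp only [Finset.mem_Ico] at hi
            simp only [Finset.mem_range]
            have := hin k
            omega
          rw [← Finset.sum_subset hsub]
          · rw [Finset.sum_Ico_eq_sum_range]
            simp only [Nat.add_sub_cancel_left]
            apply Finset.sum_congr rfl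
            intro j hj
            congr 2
            · congr 1; push_cast; ring
            · congr 1; push_cast; ring
            · congr 1; push_cast; ring
          · intro i hi hni
            simp only [Finset.mem_range] at hi
            simp only [Finset.mem_Ico, not_and_or, not_le] at hni
            have : zpad L x ((i : ℤ) - (p k : ℤ)) = 0 := by
              apply zpad_eq_zero
              omega
            rw [this, zero_mul, zero_mul]
      _ = (M : ℝ) * ∑ j ∈ Finset.range L,
            zpad L x j * zpad L x (j + l₁) * zpad L x (j + l₂) := by
          rw [Finset.sum_const, Finset.card_univ, Fintype.card_fin, nsmul_eq_mul]
  rw [hsum]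
  unfold acorr3
  have hN' : (N : ℝ) ≠ 0 := Nat.cast_ne_zero.mpr hN.ne'
  have hL' : (L : ℝ) ≠ 0 := Nat.cast_ne_zero.mpr hL.ne'
  field_simp
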